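/- Let P and B be row-stochastic n×n matrices, p_f a probability vector on V = {1,…,n} that is stationary for P (i.e., p_fᵀ P = p_fᵀ), P_f the n×n matrix all of whose rows equal p_f, and θ ∈ [0,1]. If P^r = (1−θ) P_f + θ B for some integer r ≥ 1, then for every integer s ≥ 1, P^{rs} = (1−θ^s) P_f + θ^s B^s, and moreover for every integer m ≥ 0, P^{rs+m} − P_f = θ^s (B^s P^m − P_f). -/
import Mathlib


/-- Let `P` and `B` be row-stochastic `n×n` matrices, `p_f` a probability
vector on `V = {1,…,n}` that is stationary for `P`, `P_f` the matrix all of whose rows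
equal `p_f`, and `θ ∈ [0,1]`.  If `P^r = (1−θ) P_f + θ B` for some `r ≥ 1`, then for
every integer `s ≥ 1`, `P^{rs} = (1−θ^s) P_f + θ^s B^s`, and moreover for every integer
`m ≥ 0`, `P^{rs+m} − P_f = θ^s (B^s P^m − P_f)`. -/
theorem matrix_power_decomposition
    {n : ℕ}
    (P B : Matrix (Fin n) (Fin n) ℝ)
    (hPnn : ∀ i j, 0 ≤ P i j) (hProw : ∀ i, ∑ j, P i j = 1)
    (hBnn : ∀ i j, 0 ≤ B i j) (hBrow : ∀ i, ∑ j, B i j = 1)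
    (pf : Fin n → ℝ) (hpfnn : ∀ i, 0 ≤ pf i) (hpfsum : ∑ i, pf i = 1)
    (hstat : ∀ j, ∑ i, pf i * P i j = pf j)
    (Pf : Matrix (Fin n) (Fin n) ℝ) (hPf : ∀ i j, Pf i j = pf j)
    (θ : ℝ) (hθ : θ ∈ Set.Icc (0 : ℝ) 1)
    (r : ℕ) (hr : 1 ≤ r)
    (hdecomp : P ^ r = (1 - θ) • Pf + θ • B) :
    (∀ s : ℕ, 1 ≤ s → P ^ (r * s) = (1 - θ ^ s) • Pf + θ ^ s • B ^ s) ∧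
    (∀ s m : ℕ, 1 ≤ s → P ^ (r * s + m) - Pf = θ ^ s • (B ^ s * P ^ m - Pf)) := by
  -- any matrix with unit row sums absorbs Pf on the right
  have hmul : ∀ M : Matrix (Fin n) (Fin n) ℝ, (∀ i, ∑ j, M i j = 1) → M * Pf = Pf := by
    intro M hM
    ext i j
    simp only [Matrix.mul_apply, hPf]
    rw [← Finset.sum_mul, hM, one_mul]
  have hPfrow : ∀ i, ∑ j, Pf i j = 1 := by
    intro i; simp only [hPf]; exact hpfsum
  have hPfPf : Pf * Pf = Pf := hmul Pf hPfrow
  have hBPf : B * Pf = Pf := hmul B hBrow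
  have hPPf : P * Pf = Pf := hmul P hProw
  -- B^s * Pf = Pf for all s
  have hBsPf : ∀ s : ℕ, B ^ s * Pf = Pf := by
    intro s
    induction s with
    | zero => simp
    | succ s ih => rw [pow_succ, Matrix.mul_assoc, hBPf, ih]
  -- Pf * P = Pf by stationarity
  have hPfP : Pf * P = Pf := by
    ext i j
    simp only [Matrix.mul_apply, hPf]
    exact hstat j
  -- Pf * P^m = Pf
  have hPfPm : ∀ m : ℕ, Pf * P ^ m = Pf := by
    intro m
    induction m with
    | zero => simp
    | succ m ih => rw [pow_succ, ← Matrix.mul_assoc, ih, hPfP]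
  -- θ • (Pf * B) = θ • Pf
  have hθPfB : θ • (Pf * B) = θ • Pf := by
    have h := hPfPm r
    rw [hdecomp, Matrix.mul_add, Matrix.mul_smul, Matrix.mul_smul, hPfPf] at h
    have h2 : θ • (Pf * B) = Pf - (1 - θ) • Pf := eq_sub_of_add_eq' h
    rw [h2]
    ext i j
    simp only [Matrix.sub_apply, Matrix.smul_apply, hPf, smul_eq_mul]
    ring
  -- first part
  have main : ∀ s : ℕ, 1 ≤ s → P ^ (r * s) = (1 - θ ^ s) • Pf + θ ^ s • B ^ s := by
    intro s hs
    induction s with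
    | zero => omega
    | succ s ih =>
      rcases Nat.eq_or_lt_of_le hs with h1 | h1
      · -- s + 1 = 1, i.e. s = 0
        have : s = 0 := by omega
        subst this
        simpa using hdecomp
      · have hs' : 1 ≤ s := by omega
        have ih' := ih hs'
        have : P ^ (r * (s + 1)) = P ^ (r * s) * P ^ r := by
          rw [← pow_add]; ring_nf
        rw [this, ih', hdecomp]
        have expand :
            ((1 - θ ^ s) • Pf + θ ^ s • B ^ s) * ((1 - θ) • Pf + θ • B)
              = ((1 - θ ^ s) * (1 - θ)) • (Pf * Pf)
                + (1 - θ ^ s) • (θ • (Pf * B))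
                + (θ ^ s * (1 - θ)) • (B ^ s * Pf)
                + (θ ^ s * θ) • (B ^ s * B) := by
          rw [Matrix.add_mul, Matrix.mul_add, Matrix.mul_add]
          rw [Matrix.smul_mul, Matrix.smul_mul, Matrix.smul_mul, Matrix.smul_mul,
            Matrix.mul_smul, Matrix.mul_smul, Matrix.mul_smul, Matrix.mul_smul]
          simp only [smul_smul]
          abel
        rw [expand, hPfPf, hθPfB, hBsPf, smul_smul, ← pow_succ]
        ext i j
        simp only [Matrix.add_apply, Matrix.smul_apply, smul_eq_mul, pow_succ]
        ring
  refine ⟨main, ?_⟩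
  intro s m hs
  rw [pow_add, main s hs, Matrix.add_mul, Matrix.smul_mul, Matrix.smul_mul, hPfPm]
  ext i j
  simp only [Matrix.sub_apply, Matrix.add_apply, Matrix.smul_apply, smul_eq_mul, hPf]
  ring
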